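/- There is no scoring rule S : Δ → ℝ³ over three outcomes that is strictly proper, satisfies the technical assumptions (continuity on Δ, differentiability on the relative interior of Δ, and componentwise quasiconcavity), and satisfies the budget-constrained truthfulness property. -/

import Mathlib

open scoped BigOperators

noncomputable section

/-- The probability simplex over the three outcomes `X, Y, Z` (identified with `0, 1, 2`). -/
def simplex3 : Set (Fin 3 → ℝ) := {q | (∀ i, 0 ≤ q i) ∧ ∑ i, q i = 1}

/-- The relative interior of the simplex: all coordinates strictly positive. -/
def relint3 : Set (Fin 3 → ℝ) := {q | (∀ i, 0 < q i) ∧ ∑ i, q i = 1}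

/-- Dot product of two vectors in `ℝ³`. -/
def dot3 (p s : Fin 3 → ℝ) : ℝ := ∑ i, p i * s i

/-- A scoring rule `S : Δ → ℝ³` is strictly proper if for all `p ≠ q` in the simplex,
`p·S(p) > p·S(q)`. -/
def StrictlyProper3 (S : (Fin 3 → ℝ) → Fin 3 → ℝ) : Prop :=
  ∀ p ∈ simplex3, ∀ q ∈ simplex3, p ≠ q → dot3 p (S q) < dot3 p (S p)

/-- Each component `S_i` is quasiconcave: `S_i(½p + ½q) ≥ min (S_i p) (S_i q)`, with equality
only if `S_i p = S_i q`. -/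
def QuasiConcave3 (S : (Fin 3 → ℝ) → Fin 3 → ℝ) : Prop :=
  ∀ i : Fin 3, ∀ p ∈ simplex3, ∀ q ∈ simplex3,
    min (S p i) (S q i) ≤ S ((1/2 : ℝ) • p + (1/2 : ℝ) • q) i ∧
    (S ((1/2 : ℝ) • p + (1/2 : ℝ) • q) i = min (S p i) (S q i) → S p i = S q i)

/-- The technical assumptions: continuity on the simplex, differentiability on its relative
interior, and componentwise quasiconcavity. -/
def Tech3 (S : (Fin 3 → ℝ) → Fin 3 → ℝ) : Prop :=
  ContinuousOn S simplex3 ∧ DifferentiableOn ℝ S relint3 ∧ QuasiConcave3 S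

/-- The natural budget required to move from `q₀` to `q`: the worst-case loss
`max_i (S_i(q₀) − S_i(q))`. -/
def nb3 (S : (Fin 3 → ℝ) → Fin 3 → ℝ) (q₀ q : Fin 3 → ℝ) : ℝ :=
  max (S q₀ 0 - S q 0) (max (S q₀ 1 - S q 1) (S q₀ 2 - S q 2))

/-- The budget-constrained truthfulness property: for every belief `p`, reference point `q₀`
and budget `b > 0`, the expected score `p·S(q)` over feasible reports (`q ∈ Δ` with
`nb(q₀,q) ≤ b`) is uniquely maximized at `q* = α p + (1−α) q₀`, where `α` is the largest
element of `{α ∈ [0,1] : nb(q₀, α p + (1−α) q₀) ≤ b}`. -/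
def BCT3 (S : (Fin 3 → ℝ) → Fin 3 → ℝ) : Prop :=
  ∀ p ∈ simplex3, ∀ q₀ ∈ simplex3, ∀ b : ℝ, 0 < b →
    ∃ α : ℝ,
      IsGreatest {a : ℝ | a ∈ Set.Icc (0:ℝ) 1 ∧
        nb3 S q₀ (a • p + (1 - a) • q₀) ≤ b} α ∧
      ∀ q ∈ simplex3, nb3 S q₀ q ≤ b → q ≠ α • p + (1 - α) • q₀ →
        dot3 p (S q) < dot3 p (S (α • p + (1 - α) • q₀))

namespace ImpossibilityAux

/-- vertex of the simplex -/
def vtx (i : Fin 3) : Fin 3 → ℝ := fun j => if j = i then 1 else 0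

lemma vtx_mem (i : Fin 3) : vtx i ∈ simplex3 := by
  constructor
  · intro j; dsimp [vtx]; split <;> norm_num
  · fin_cases i <;> simp [vtx, Fin.sum_univ_three]

lemma combo_apply (a : ℝ) (p q : Fin 3 → ℝ) (j : Fin 3) :
    (a • p + (1 - a) • q) j = a * p j + (1 - a) * q j := rfl

lemma combo_mem {p q : Fin 3 → ℝ} (hp : p ∈ simplex3) (hq : q ∈ simplex3)
    {a : ℝ} (h0 : 0 ≤ a) (h1 : a ≤ 1) : a • p + (1 - a) • q ∈ simplex3 := by
  obtain ⟨hp0, hp1⟩ := hp; obtain ⟨hq0, hq1⟩ := hq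
  constructor
  · intro j
    rw [combo_apply]
    have h2 := hp0 j; have h3 := hq0 j
    have h4 : (0:ℝ) ≤ 1 - a := by linarith
    positivity
  · have h5 : ∑ i, (a • p + (1 - a) • q) i = a * (∑ i, p i) + (1-a) * (∑ i, q i) := by
      simp only [combo_apply, Finset.mul_sum, Finset.sum_add_distrib]
    rw [h5, hp1, hq1]; ring

variable (S : (Fin 3 → ℝ) → Fin 3 → ℝ)

lemma sub_le_nb3 (x y : Fin 3 → ℝ) (j : Fin 3) : S x j - S y j ≤ nb3 S x y := by
  fin_cases j
  · exact le_max_left _ _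
  · exact (le_max_left _ _).trans (le_max_right _ _)
  · exact (le_max_right _ _).trans (le_max_right _ _)

lemma nb3_le {x y : Fin 3 → ℝ} {c : ℝ} (h : ∀ j, S x j - S y j ≤ c) : nb3 S x y ≤ c :=
  max_le (h 0) (max_le (h 1) (h 2))

/-- For any two points there is a vertex not on the affine line through them. -/
lemma exists_offline (p q₀ : Fin 3 → ℝ) :
    ∃ i : Fin 3, ∀ μ : ℝ, vtx i ≠ μ • p + (1 - μ) • q₀ := by
  by_contra h
  push_neg at h
  obtain ⟨μ0, h0⟩ := h 0
  obtain ⟨μ1, h1⟩ := h 1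
  obtain ⟨μ2, h2⟩ := h 2
  have e00 : (1:ℝ) = μ0 * p 0 + (1 - μ0) * q₀ 0 := by
    have := congrFun h0 0; rw [combo_apply] at this; simpa [vtx] using this
  have e01 : (0:ℝ) = μ0 * p 1 + (1 - μ0) * q₀ 1 := by
    have := congrFun h0 1; rw [combo_apply] at this; simpa [vtx] using this
  have e11 : (1:ℝ) = μ1 * p 1 + (1 - μ1) * q₀ 1 := by
    have := congrFun h1 1; rw [combo_apply] at this; simpa [vtx] using this
  have e20 : (0:ℝ) = μ2 * p 0 + (1 - μ2) * q₀ 0 := by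
    have := congrFun h2 0; rw [combo_apply] at this; simpa [vtx] using this
  have e21 : (0:ℝ) = μ2 * p 1 + (1 - μ2) * q₀ 1 := by
    have := congrFun h2 1; rw [combo_apply] at this; simpa [vtx] using this
  have c1 : (μ0 - μ2) * (p 0 - q₀ 0) = 1 := by linear_combination e20 - e00
  have c2 : (μ0 - μ2) * (p 1 - q₀ 1) = 0 := by linear_combination e21 - e01
  have c3 : (μ1 - μ0) * (p 1 - q₀ 1) = 1 := by linear_combination e01 - e11
  have h4 : (μ0 - μ2) * ((μ1 - μ0) * (p 1 - q₀ 1)) = μ0 - μ2 := by rw [c3, mul_one]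
  have h5 : (μ0 - μ2) * ((μ1 - μ0) * (p 1 - q₀ 1)) = 0 := by
    calc (μ0 - μ2) * ((μ1 - μ0) * (p 1 - q₀ 1))
        = (μ1 - μ0) * ((μ0 - μ2) * (p 1 - q₀ 1)) := by ring
      _ = 0 := by rw [c2, mul_zero]
  have h6 : μ0 - μ2 = 0 := by rw [← h4, h5]
  rw [h6, zero_mul] at c1
  norm_num at c1

/-- Core contradiction: two BCT problems with nested feasible regions and a shared optimum
force the optimum on two distinct lines through `p`. -/
lemma core (hBCT : BCT3 S) (m : Fin 3 → ℝ) (hm : ∀ j, ∀ q ∈ simplex3, m j ≤ S q j)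
    {p q₀ q₀' : Fin 3 → ℝ} (hp : p ∈ simplex3) (hq₀ : q₀ ∈ simplex3) (hq₀' : q₀' ∈ simplex3)
    {b b' : ℝ} (hb : 0 < b) (hb' : 0 < b') (hpb : b < nb3 S q₀ p)
    (hH : ∀ j, S q₀' j - b' = S q₀ j - b ∨ (S q₀' j - b' ≤ m j ∧ S q₀ j - b < m j))
    (hcol : ∀ μ : ℝ, q₀' ≠ μ • p + (1 - μ) • q₀) : False := by
  obtain ⟨α, hG, hU1⟩ := hBCT p hp q₀ hq₀ b hb
  obtain ⟨α', hG', hU2⟩ := hBCT p hp q₀' hq₀' b' hb'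
  obtain ⟨⟨hαIcc, hαnb⟩, -⟩ := hG
  obtain ⟨⟨hα'Icc, hα'nb⟩, -⟩ := hG'
  have hα1 : α ≠ 1 := by
    intro h
    rw [h] at hαnb
    have h2 : (1:ℝ) • p + (1 - 1 : ℝ) • q₀ = p := by
      funext j; rw [combo_apply]; ring
    rw [h2] at hαnb
    linarith
  set qs := α • p + (1 - α) • q₀ with hqs_def
  set qs' := α' • p + (1 - α') • q₀' with hqs'_def
  have hqsΔ : qs ∈ simplex3 := combo_mem hp hq₀ hαIcc.1 hαIcc.2
  have hqs'Δ : qs' ∈ simplex3 := combo_mem hp hq₀' hα'Icc.1 hα'Icc.2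
  have hqs_c : ∀ j, S q₀ j - S qs j ≤ b := fun j => (sub_le_nb3 S q₀ qs j).trans hαnb
  have hqs'_c : ∀ j, S q₀' j - S qs' j ≤ b' := fun j => (sub_le_nb3 S q₀' qs' j).trans hα'nb
  -- qs is feasible for the second problem
  have h5 : nb3 S q₀' qs ≤ b' := by
    apply nb3_le
    intro j
    rcases hH j with h | ⟨h1, h2⟩
    · have := hqs_c j; linarith
    · have := hm j qs hqsΔ; linarith
  -- qs' is feasible for the first problem
  have h6 : nb3 S q₀ qs' ≤ b := by
    apply nb3_le
    intro j
    rcases hH j with h | ⟨h1, h2⟩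
    · have := hqs'_c j; linarith
    · have := hm j qs' hqs'Δ; linarith
  -- the optima coincide
  have hqq : qs = qs' := by
    by_contra hne
    have l1 := hU1 qs' hqs'Δ h6 (Ne.symm hne)
    have l2 := hU2 qs hqsΔ h5 hne
    linarith
  by_cases hα'1 : α' = 1
  · -- then qs = p, impossible since α < 1 and p ≠ q₀
    have hqp : qs = p := by
      rw [hqq, hqs'_def, hα'1]
      funext j; rw [combo_apply]; ring
    have h1a : (1:ℝ) - α ≠ 0 := sub_ne_zero.mpr (Ne.symm hα1)
    have hq₀p : q₀ = p := by
      funext j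
      have hc := congrFun hqp j
      rw [hqs_def, combo_apply] at hc
      have h7 : (1 - α) * q₀ j = (1 - α) * p j := by linarith
      exact mul_left_cancel₀ h1a h7
    rw [← hq₀p] at hpb
    have h8 : nb3 S q₀ q₀ = 0 := by simp [nb3]
    rw [h8] at hpb
    linarith
  · have h1a' : (1:ℝ) - α' ≠ 0 := sub_ne_zero.mpr (Ne.symm hα'1)
    apply hcol ((α - α') / (1 - α'))
    funext j
    have hc := congrFun hqq j
    rw [hqs_def, hqs'_def, combo_apply, combo_apply] at hc
    rw [combo_apply]
    have goal' : (1 - α') * q₀' j = (α - α') * p j + (1 - α) * q₀ j := by linarith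
    field_simp
    linarith [goal']

/-- The main construction: given a coordinate `jx` whose "gap" at `q₀` strictly exceeds a
budget `b`, with the other coordinates either slack or tied, we reach a contradiction. -/
lemma cons (hS : ContinuousOn S simplex3) (hBCT : BCT3 S)
    (m : Fin 3 → ℝ) (hm : ∀ j, ∀ q ∈ simplex3, m j ≤ S q j)
    (jx l r : Fin 3) (hcover : ∀ j : Fin 3, j = jx ∨ j = l ∨ j = r)
    (p : Fin 3 → ℝ) (hp : p ∈ simplex3) (hpm : S p jx = m jx)
    (q₀ : Fin 3 → ℝ) (hq₀ : q₀ ∈ simplex3)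
    (b : ℝ) (hb : 0 < b) (hCb : b < S q₀ jx - m jx)
    (hr : S q₀ r - m r < b)
    (hl : S q₀ l - m l < b ∨
      (S q₀ l - m l = S q₀ jx - m jx ∧
        ∀ q ∈ simplex3, S q r - m r < S q jx - m jx → S q r - m r < S q l - m l →
          S q l - m l = S q jx - m jx)) : False := by
  obtain ⟨i, hvtx⟩ := exists_offline p q₀
  set c : ℝ → (Fin 3 → ℝ) := fun ε => ε • vtx i + (1 - ε) • q₀ with hc_def
  have hcmem : ∀ ε ∈ Set.Icc (0:ℝ) 1, c ε ∈ simplex3 := fun ε hε =>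
    combo_mem (vtx_mem i) hq₀ hε.1 hε.2
  have hc0 : c 0 = q₀ := by funext j; simp [hc_def, combo_apply]
  have hccont : Continuous c := by
    apply Continuous.add
    · exact continuous_id.smul continuous_const
    · exact (continuous_const.sub continuous_id).smul continuous_const
  have hSj : ∀ j, ContinuousWithinAt (fun ε => S (c ε) j) (Set.Icc (0:ℝ) 1) 0 := by
    intro j
    have h1 : ContinuousWithinAt c (Set.Icc (0:ℝ) 1) 0 := hccont.continuousWithinAt
    have h2 : ContinuousWithinAt S simplex3 (c 0) := by
      rw [hc0]; exact hS q₀ hq₀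
    have h3 := h2.comp h1 (fun ε hε => hcmem ε hε)
    exact ((continuous_apply j).continuousAt).comp_continuousWithinAt h3
  -- the "eventually" machinery on the filter 𝓝[(0,1]] 0
  have hmono : nhdsWithin (0:ℝ) (Set.Ioc 0 1) ≤ nhdsWithin 0 (Set.Icc 0 1) :=
    nhdsWithin_mono _ Set.Ioc_subset_Icc_self
  have hev : ∀ (f g : ℝ → ℝ), ContinuousWithinAt f (Set.Icc (0:ℝ) 1) 0 →
      ContinuousWithinAt g (Set.Icc (0:ℝ) 1) 0 → f 0 < g 0 →
      ∀ᶠ ε in nhdsWithin (0:ℝ) (Set.Ioc 0 1), f ε < g ε := by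
    intro f g hf hg hlt
    have h1 : Filter.Tendsto (fun ε => f ε - g ε) (nhdsWithin (0:ℝ) (Set.Icc 0 1))
        (nhds (f 0 - g 0)) := hf.sub hg
    have h2 : ∀ᶠ ε in nhdsWithin (0:ℝ) (Set.Icc 0 1), f ε - g ε < 0 :=
      h1.eventually_lt_const (by linarith)
    exact (h2.filter_mono hmono).mono (fun ε hε => by linarith)
  have hNeBot : (nhdsWithin (0:ℝ) (Set.Ioc 0 1)).NeBot := by
    rw [nhdsWithin_Ioc_eq_nhdsGT (by norm_num : (0:ℝ) < 1)]
    infer_instance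
  set b'f : ℝ → ℝ := fun ε => b + S (c ε) jx - S q₀ jx with hb'f_def
  have hb'cont : ContinuousWithinAt b'f (Set.Icc (0:ℝ) 1) 0 := by
    apply ContinuousWithinAt.sub
    · exact continuousWithinAt_const.add (hSj jx)
    · exact continuousWithinAt_const
  have hb'0 : b'f 0 = b := by simp [hb'f_def, hc0]
  -- eventual facts
  have F0 : ∀ᶠ ε in nhdsWithin (0:ℝ) (Set.Ioc 0 1), 0 < b'f ε := by
    have := hev (fun _ => 0) b'f continuousWithinAt_const hb'cont (by rw [hb'0]; exact hb)
    exact this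
  have Fr : ∀ᶠ ε in nhdsWithin (0:ℝ) (Set.Ioc 0 1), S (c ε) r - m r < b'f ε := by
    have := hev (fun ε => S (c ε) r - m r) b'f ((hSj r).sub continuousWithinAt_const)
      hb'cont (by show S (c 0) r - m r < b'f 0; rw [hb'0, hc0]; exact hr)
    exact this
  have Fmem : ∀ᶠ ε in nhdsWithin (0:ℝ) (Set.Ioc 0 1), ε ∈ Set.Ioc (0:ℝ) 1 :=
    eventually_mem_nhdsWithin
  -- key application of `core` once we have a good ε
  have main : ∀ ε ∈ Set.Ioc (0:ℝ) 1, 0 < b'f ε → S (c ε) r - m r < b'f ε →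
      (S (c ε) l - b'f ε = S q₀ l - b ∨ (S (c ε) l - b'f ε ≤ m l ∧ S q₀ l - b < m l)) →
      False := by
    intro ε hε hbε hrε hlε
    have hq₀' : c ε ∈ simplex3 := hcmem ε ⟨le_of_lt hε.1, hε.2⟩
    have hpb : b < nb3 S q₀ p := by
      have h1 := sub_le_nb3 S q₀ p jx
      rw [hpm] at h1
      linarith
    apply core S hBCT m hm hp hq₀ hq₀' hb hbε hpb ?_ ?_
    · -- the per-coordinate hypothesis
      intro j
      rcases hcover j with hj | hj | hj
      · subst hj; left; simp only [hb'f_def]; ring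
      · subst hj; exact hlε
      · subst hj; right
        constructor
        · linarith
        · linarith
    · -- off the line
      intro μ hμ
      apply hvtx (μ / ε)
      have hε0 : ε ≠ 0 := ne_of_gt hε.1
      funext j
      have hc1 := congrFun hμ j
      simp only [hc_def, combo_apply] at hc1
      rw [combo_apply]
      have goal' : ε * vtx i j = μ * p j + (ε - μ) * q₀ j := by linarith
      field_simp
      linarith [goal']
  rcases hl with hl | ⟨hleq, htie⟩
  · -- slack case for l
    have Fl : ∀ᶠ ε in nhdsWithin (0:ℝ) (Set.Ioc 0 1), S (c ε) l - m l < b'f ε := by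
      have := hev (fun ε => S (c ε) l - m l) b'f ((hSj l).sub continuousWithinAt_const)
        hb'cont (by show S (c 0) l - m l < b'f 0; rw [hb'0, hc0]; exact hl)
      exact this
    obtain ⟨ε, hε, hbε, hrε, hlε⟩ := (Fmem.and (F0.and (Fr.and Fl))).exists
    exact main ε hε hbε hrε (Or.inr ⟨by linarith, by linarith⟩)
  · -- tie case for l
    have Ft1 : ∀ᶠ ε in nhdsWithin (0:ℝ) (Set.Ioc 0 1),
        S (c ε) r - m r < S (c ε) jx - m jx := by
      have := hev (fun ε => S (c ε) r - m r) (fun ε => S (c ε) jx - m jx)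
        ((hSj r).sub continuousWithinAt_const) ((hSj jx).sub continuousWithinAt_const)
        (by show S (c 0) r - m r < S (c 0) jx - m jx; rw [hc0]; linarith)
      exact this
    have Ft2 : ∀ᶠ ε in nhdsWithin (0:ℝ) (Set.Ioc 0 1),
        S (c ε) r - m r < S (c ε) l - m l := by
      have := hev (fun ε => S (c ε) r - m r) (fun ε => S (c ε) l - m l)
        ((hSj r).sub continuousWithinAt_const) ((hSj l).sub continuousWithinAt_const)
        (by show S (c 0) r - m r < S (c 0) l - m l; rw [hc0]; linarith)
      exact this
    obtain ⟨ε, hε, hbε, hrε, ht1, ht2⟩ := (Fmem.and (F0.and (Fr.and (Ft1.and Ft2)))).exists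
    have hq₀' : c ε ∈ simplex3 := hcmem ε ⟨le_of_lt hε.1, hε.2⟩
    have htieε := htie (c ε) hq₀' ht1 ht2
    apply main ε hε hbε hrε
    left
    simp only [hb'f_def]
    have h1 : S (c ε) l - m l = S (c ε) jx - m jx := htieε
    have h2 : S q₀ l - m l = S q₀ jx - m jx := hleq
    linarith

end ImpossibilityAux

open ImpossibilityAux in
/-- Theorem `impossibility`: there is no scoring rule over three outcomes that is
strictly proper, satisfies the technical assumptions (continuity on `Δ`, differentiability on
the relative interior of `Δ`, componentwise quasiconcavity), and satisfies the
budget-constrained truthfulness property. -/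
theorem stmt3 :
    ¬ ∃ S : (Fin 3 → ℝ) → Fin 3 → ℝ, StrictlyProper3 S ∧ Tech3 S ∧ BCT3 S := by
  rintro ⟨S, hSP, ⟨hScont, -, -⟩, hBCT⟩
  -- minimum of each coordinate of S over the simplex
  have hmin : ∀ j : Fin 3, ∃ w ∈ simplex3, ∀ q ∈ simplex3, S w j ≤ S q j := by
    intro j
    have hcomp : IsCompact simplex3 := by
      show IsCompact (stdSimplex ℝ (Fin 3))
      exact isCompact_stdSimplex _ _
    have hne : simplex3.Nonempty := ⟨vtx 0, vtx_mem 0⟩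
    have hcont : ContinuousOn (fun q => S q j) simplex3 :=
      (continuous_apply j).comp_continuousOn hScont
    obtain ⟨x, hx, hminx⟩ := hcomp.exists_isMinOn hne hcont
    exact ⟨x, hx, fun y hy => hminx hy⟩
  choose w hwΔ hwmin using hmin
  set m : Fin 3 → ℝ := fun j => S (w j) j with hm_def
  have hm : ∀ j, ∀ q ∈ simplex3, m j ≤ S q j := fun j q hq => hwmin j q hq
  by_cases hA : ∃ q₀ ∈ simplex3, ∃ jx : Fin 3, ∀ j, j ≠ jx → S q₀ j - m j < S q₀ jx - m jx
  · -- unique top coordinate somewhere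
    obtain ⟨q₀, hq₀, jx, hjx⟩ := hA
    obtain ⟨l, r, hlj, hrj, hcover⟩ :
        ∃ l r : Fin 3, l ≠ jx ∧ r ≠ jx ∧ ∀ j : Fin 3, j = jx ∨ j = l ∨ j = r := by
      fin_cases jx
      · exact ⟨1, 2, by decide, by decide, by decide⟩
      · exact ⟨0, 2, by decide, by decide, by decide⟩
      · exact ⟨0, 1, by decide, by decide, by decide⟩
    set C := S q₀ jx - m jx with hC_def
    have hgr0 : 0 ≤ S q₀ r - m r := by have := hm r q₀ hq₀; linarith
    have hgl0 : 0 ≤ S q₀ l - m l := by have := hm l q₀ hq₀; linarith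
    have hlC : S q₀ l - m l < C := hjx l hlj
    have hrC : S q₀ r - m r < C := hjx r hrj
    set D := max (S q₀ l - m l) (S q₀ r - m r) with hD_def
    have hDC : D < C := max_lt hlC hrC
    have hD0 : 0 ≤ D := le_trans hgr0 (le_max_right _ _)
    set b := (C + D) / 2 with hb_def
    have hb : 0 < b := by rw [hb_def]; linarith
    apply cons S hScont hBCT m hm jx l r hcover (w jx) (hwΔ jx) rfl q₀ hq₀ b hb
    · rw [hb_def]; linarith
    · have : S q₀ r - m r ≤ D := le_max_right _ _
      rw [hb_def]; linarith
    · left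
      have : S q₀ l - m l ≤ D := le_max_left _ _
      rw [hb_def]; linarith
  · push_neg at hA
    -- hA : ∀ q₀ ∈ simplex3, ∀ jx, ∃ j, j ≠ jx ∧ S q₀ jx - m jx ≤ S q₀ j - m j
    by_cases hC : ∀ q ∈ simplex3, S q 0 - m 0 = S q 1 - m 1 ∧ S q 1 - m 1 = S q 2 - m 2
    · -- fully degenerate case: contradicts strict properness
      have h01 : vtx 0 ≠ vtx 1 := by
        intro h
        have := congrFun h 0
        simp [vtx] at this
      have p1 := hSP (vtx 0) (vtx_mem 0) (vtx 1) (vtx_mem 1) h01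
      have p2 := hSP (vtx 1) (vtx_mem 1) (vtx 0) (vtx_mem 0) (Ne.symm h01)
      have d1 : dot3 (vtx 0) (S (vtx 1)) = S (vtx 1) 0 := by
        simp [dot3, vtx, Fin.sum_univ_three]
      have d2 : dot3 (vtx 0) (S (vtx 0)) = S (vtx 0) 0 := by
        simp [dot3, vtx, Fin.sum_univ_three]
      have d3 : dot3 (vtx 1) (S (vtx 0)) = S (vtx 0) 1 := by
        simp [dot3, vtx, Fin.sum_univ_three]
      have d4 : dot3 (vtx 1) (S (vtx 1)) = S (vtx 1) 1 := by
        simp [dot3, vtx, Fin.sum_univ_three]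
      rw [d1, d2] at p1
      rw [d3, d4] at p2
      have t0 := (hC (vtx 0) (vtx_mem 0)).1
      have t1 := (hC (vtx 1) (vtx_mem 1)).1
      linarith
    · push_neg at hC
      obtain ⟨q₀, hq₀, hneq⟩ := hC
      -- helper to finish given a 2-way-tie configuration
      have finish : ∀ k l r : Fin 3, (∀ j : Fin 3, j = k ∨ j = l ∨ j = r) →
          S q₀ l - m l = S q₀ k - m k → S q₀ r - m r < S q₀ k - m k → False := by
        intro k l r hcover hleq hrlt
        have hgr0 : 0 ≤ S q₀ r - m r := by have := hm r q₀ hq₀; linarith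
        set b := ((S q₀ k - m k) + (S q₀ r - m r)) / 2 with hb_def
        have hb : 0 < b := by rw [hb_def]; linarith
        apply cons S hScont hBCT m hm k l r hcover (w k) (hwΔ k) rfl q₀ hq₀ b hb
        · rw [hb_def]; linarith
        · rw [hb_def]; linarith
        · right
          refine ⟨hleq, ?_⟩
          intro q hq h1 h2
          obtain ⟨j, hjk, hle⟩ := hA q hq k
          have hlk : S q k - m k ≤ S q l - m l := by
            rcases hcover j with hj | hj | hj
            · exact absurd hj hjk
            · subst hj; exact hle
            · subst hj; linarith
          obtain ⟨j', hjl, hle'⟩ := hA q hq l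
          have hkl : S q l - m l ≤ S q k - m k := by
            rcases hcover j' with hj | hj | hj
            · subst hj; exact hle'
            · exact absurd hj hjl
            · subst hj; linarith
          linarith
      -- derive a 2-way-tie configuration
      have ha0' := hA q₀ hq₀ 0
      have ha1' := hA q₀ hq₀ 1
      have ha2' := hA q₀ hq₀ 2
      have ha0 : S q₀ 0 - m 0 ≤ S q₀ 1 - m 1 ∨ S q₀ 0 - m 0 ≤ S q₀ 2 - m 2 := by
        obtain ⟨j, hj, hle⟩ := ha0'
        fin_cases j
        · exact absurd rfl hj
        · exact Or.inl hle
        · exact Or.inr hle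
      have ha1 : S q₀ 1 - m 1 ≤ S q₀ 0 - m 0 ∨ S q₀ 1 - m 1 ≤ S q₀ 2 - m 2 := by
        obtain ⟨j, hj, hle⟩ := ha1'
        fin_cases j
        · exact Or.inl hle
        · exact absurd rfl hj
        · exact Or.inr hle
      have ha2 : S q₀ 2 - m 2 ≤ S q₀ 0 - m 0 ∨ S q₀ 2 - m 2 ≤ S q₀ 1 - m 1 := by
        obtain ⟨j, hj, hle⟩ := ha2'
        fin_cases j
        · exact Or.inl hle
        · exact Or.inr hle
        · exact absurd rfl hj
      -- hneq : A0 = A1 → A1 ≠ A2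
      rcases ha0 with h01 | h02 <;> rcases ha1 with h10 | h12 <;> rcases ha2 with h20 | h21
      · -- A0≤A1, A1≤A0, A2≤A0 : tie {0,1}, need A2 < A0
        rcases eq_or_lt_of_le h20 with he | hlt
        · exact absurd (by linarith) (hneq (by linarith))
        · exact finish 0 1 2 (by decide) (by linarith) (by linarith)
      · -- A0≤A1, A1≤A0, A2≤A1
        rcases eq_or_lt_of_le h21 with he | hlt
        · exact absurd (by linarith) (hneq (by linarith))
        · exact finish 0 1 2 (by decide) (by linarith) (by linarith)
      · -- A0≤A1, A1≤A2, A2≤A0 : all equal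
        exact absurd (by linarith) (hneq (by linarith))
      · -- A0≤A1, A1≤A2, A2≤A1 : tie {1,2}, need A0 < A1
        rcases eq_or_lt_of_le h01 with he | hlt
        · exact absurd (by linarith) (hneq (by linarith))
        · exact finish 1 2 0 (by decide) (by linarith) (by linarith)
      · -- A0≤A2, A1≤A0, A2≤A0 : tie {0,2}, need A1 < A0
        rcases eq_or_lt_of_le h10 with he | hlt
        · exact absurd (by linarith) (hneq (by linarith))
        · exact finish 0 2 1 (by decide) (by linarith) (by linarith)
      · -- A0≤A2, A1≤A0, A2≤A1 : all equal
        exact absurd (by linarith) (hneq (by linarith))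
      · -- A0≤A2, A1≤A2, A2≤A0 : tie {0,2}, need A1 < A0
        rcases eq_or_lt_of_le h12 with he | hlt
        · exact absurd (by linarith) (hneq (by linarith))
        · exact finish 0 2 1 (by decide) (by linarith) (by linarith)
      · -- A0≤A2, A1≤A2, A2≤A1 : tie {1,2}, need A0 < A1
        rcases eq_or_lt_of_le h02 with he | hlt
        · exact absurd (by linarith) (hneq (by linarith))
        · exact finish 1 2 0 (by decide) (by linarith) (by linarith)
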